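/- Let d ≥ 1, k ≥ 2, and let ν be a finite Borel measure on ℝ^d that is absolutely continuous with respect to Lebesgue measure, with Radon–Nikodym derivative f satisfying ∫ f(u)^k du < ∞. Then lim_{ε→0} ε^{−d(k−1)} ∫ ν(B(u, ε))^{k−1} dν(u) = ω_d^{k−1} ∫_{ℝ^d} f(u)^k du, where B(u, ε) is the open ball of radius ε about u and ω_d is the Lebesgue measure of the unit ball in ℝ^d. -/

import Mathlib

open MeasureTheory Matrix

noncomputable section

/-- `ℝ^d` with the Euclidean norm. -/
abbrev Pt (d : ℕ) := EuclideanSpace ℝ (Fin d)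

/-- `(ℝ^d)^k` with the Euclidean norm. -/
abbrev Cfg (d k : ℕ) := PiLp 2 fun _ : Fin k => Pt d

instance (d k : ℕ) : MeasurableSpace (Cfg d k) :=
  (inferInstance : MeasurableSpace (∀ _ : Fin k, Pt d)).comap WithLp.ofLp

/-- The diagonal action of an isometry `g` of `ℝ^d` on `(ℝ^d)^k`:
`g·(x₁,…,x_k) = (g x₁, …, g x_k)`. -/
def diagAct {d k : ℕ} (g : Pt d ≃ᵢ Pt d) (x : Cfg d k) : Cfg d k := WithLp.toLp 2 fun i => g (x i)

/-- `d(x,y) :=` the infimum over all isometries `g` of `ℝ^d` of `‖x − g·y‖`. -/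
def confDist {d k : ℕ} (x y : Cfg d k) : ℝ :=
  ⨅ g : Pt d ≃ᵢ Pt d, ‖x - diagAct g y‖

/-- The action of `ρ ∈ O(d)` on a vector of `ℝ^d`. -/
def rotAct {d : ℕ} (ρ : orthogonalGroup (Fin d) ℝ) (v : Pt d) : Pt d :=
  Matrix.toEuclideanCLM (𝕜 := ℝ) (ρ : Matrix (Fin d) (Fin d) ℝ) v

/-- The distance on `O(d)` induced by the operator norm on `d × d` matrices. -/
def opDist {d : ℕ} (ρ σ : orthogonalGroup (Fin d) ℝ) : ℝ :=
  ‖Matrix.toEuclideanCLM (𝕜 := ℝ) (ρ : Matrix (Fin d) (Fin d) ℝ)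
    - Matrix.toEuclideanCLM (𝕜 := ℝ) (σ : Matrix (Fin d) (Fin d) ℝ)‖

instance (d : ℕ) : MeasurableSpace (orthogonalGroup (Fin d) ℝ) := borel _
instance (d : ℕ) : BorelSpace (orthogonalGroup (Fin d) ℝ) := ⟨rfl⟩

instance (d : ℕ) : IsTopologicalGroup (orthogonalGroup (Fin d) ℝ) where
  continuous_inv := continuous_induced_rng.mpr <|
    (continuous_star.comp continuous_subtype_val : _)

theorem isCompact_orthogonalGroup (d : ℕ) :
    IsCompact (orthogonalGroup (Fin d) ℝ : Set (Matrix (Fin d) (Fin d) ℝ)) := by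
  have hsub : (orthogonalGroup (Fin d) ℝ : Set (Matrix (Fin d) (Fin d) ℝ)) ⊆
      Set.pi Set.univ fun _ : Fin d => Set.pi Set.univ fun _ : Fin d => Set.Icc (-1 : ℝ) 1 := by
    intro U hU i _ j _
    have := entry_norm_bound_of_unitary hU i j
    rw [Real.norm_eq_abs] at this
    constructor <;> linarith [abs_le.mp this]
  have hclosed : IsClosed (orthogonalGroup (Fin d) ℝ : Set (Matrix (Fin d) (Fin d) ℝ)) := by
    have heq : (orthogonalGroup (Fin d) ℝ : Set (Matrix (Fin d) (Fin d) ℝ)) =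
        {U | star U * U = 1} ∩ {U | U * star U = 1} := by
      ext U
      exact Unitary.mem_iff
    rw [heq]
    exact (isClosed_eq ((continuous_star.comp continuous_id).matrix_mul continuous_id)
        continuous_const).inter
      (isClosed_eq (continuous_id.matrix_mul (continuous_star.comp continuous_id))
        continuous_const)
  have hcpt : IsCompact (Set.pi Set.univ fun _ : Fin d => Set.pi Set.univ
      fun _ : Fin d => Set.Icc (-1 : ℝ) 1) :=
    isCompact_univ_pi fun _ => isCompact_univ_pi fun _ => isCompact_Icc
  exact hcpt.of_isClosed_subset hclosed hsub

instance (d : ℕ) : CompactSpace (orthogonalGroup (Fin d) ℝ) :=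
  isCompact_iff_compactSpace.mp (isCompact_orthogonalGroup d)

set_option synthInstance.maxHeartbeats 1000000 in
instance (d : ℕ) : LocallyCompactSpace (orthogonalGroup (Fin d) ℝ) := inferInstance

/-- The Haar measure on `O(d)`. -/
def haarOd (d : ℕ) : Measure (orthogonalGroup (Fin d) ℝ) := Measure.haar

open Metric Filter ENNReal

lemma jensen_pow {α : Type*} [MeasurableSpace α] (μ : Measure α) {f : α → ℝ≥0∞}
    (hf : AEMeasurable f μ) {k : ℕ} (hk : 2 ≤ k) :
    (∫⁻ v, f v ∂μ) ^ k ≤ (μ Set.univ) ^ (k - 1) * ∫⁻ v, f v ^ k ∂μ := by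
  have hk1 : (1 : ℝ) < (k : ℝ) := by exact_mod_cast hk.trans_lt' one_lt_two
  have hk0 : (k : ℝ) ≠ 0 := by positivity
  have hpq : (k : ℝ).HolderConjugate ((k : ℝ) / ((k : ℝ) - 1)) :=
    Real.HolderConjugate.conjExponent hk1
  have H := ENNReal.lintegral_mul_le_Lp_mul_Lq μ hpq hf aemeasurable_const
    (g := fun _ => (1 : ℝ≥0∞))
  simp only [Pi.mul_apply, mul_one, ENNReal.one_rpow, lintegral_one] at H
  have H2 := ENNReal.rpow_le_rpow H (le_of_lt (by positivity : (0:ℝ) < (k:ℝ)))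
  rw [ENNReal.mul_rpow_of_nonneg _ _ (by positivity), ← ENNReal.rpow_mul, ← ENNReal.rpow_mul,
    one_div_mul_cancel hk0, ENNReal.rpow_one] at H2
  have hq : 1 / ((k : ℝ) / ((k : ℝ) - 1)) * (k : ℝ) = ((k - 1 : ℕ) : ℝ) := by
    rw [Nat.cast_sub (by omega)]
    field_simp
    norm_num
  rw [hq] at H2
  simp only [ENNReal.rpow_natCast] at H2
  exact H2.trans_eq (mul_comm _ _)

lemma meas_ball {d : ℕ} (ν : Measure (Pt d)) [SFinite ν] (ε : ℝ) :
    Measurable fun u : Pt d => ν (Metric.ball u ε) := by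
  have hS : MeasurableSet {p : Pt d × Pt d | dist p.2 p.1 < ε} :=
    (isOpen_lt (continuous_snd.dist continuous_fst) continuous_const).measurableSet
  have h : ∀ u : Pt d,
      ν (Metric.ball u ε)
        = ∫⁻ v, {p : Pt d × Pt d | dist p.2 p.1 < ε}.indicator 1 (u, v) ∂ν := by
    intro u
    rw [← lintegral_indicator_one measurableSet_ball]
    refine lintegral_congr fun v => ?_
    classical
    simp [Set.indicator_apply, Metric.mem_ball]
  simp_rw [h]
  exact Measurable.lintegral_prod_right' (measurable_one.indicator hS)

lemma keyA {d k : ℕ} (hd : 1 ≤ d) (hk : 2 ≤ k) (ν : Measure (Pt d)) [IsFiniteMeasure ν]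
    (hac : ν ≪ volume) {ε : ℝ} (hε : 0 < ε) :
    ∫⁻ u, ν (Metric.ball u ε) ^ (k - 1) ∂ν
      ≤ (ENNReal.ofReal (ε ^ d) * volume (Metric.ball (0 : Pt d) 1)) ^ (k - 1) *
        ∫⁻ u, ν.rnDeriv volume u ^ k ∂volume := by
  haveI : Nonempty (Fin d) := Fin.pos_iff_nonempty.mp hd
  set f := ν.rnDeriv volume with hfdef
  have hfm : Measurable f := Measure.measurable_rnDeriv ν volume
  set ω := volume (Metric.ball (0 : Pt d) 1) with hω
  set C := ENNReal.ofReal (ε ^ d) * ω with hC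
  set I := ∫⁻ u, f u ^ k ∂volume with hI
  have hvol : ∀ u : Pt d, volume (Metric.ball u ε) = C := fun u => by
    rw [Measure.addHaar_ball (volume : Measure (Pt d)) u hε.le, finrank_euclideanSpace_fin]
  have hball : ∀ u : Pt d, ν (Metric.ball u ε) = ∫⁻ v in Metric.ball u ε, f v ∂volume :=
    fun u => (Measure.setLIntegral_rnDeriv hac _).symm
  -- pointwise Jensen
  have hJ : ∀ u : Pt d,
      ν (Metric.ball u ε) ^ k ≤ C ^ (k - 1) * ∫⁻ v in Metric.ball u ε, f v ^ k ∂volume := by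
    intro u
    rw [hball u]
    have := jensen_pow (volume.restrict (Metric.ball u ε)) hfm.aemeasurable hk
    rwa [Measure.restrict_apply_univ, hvol u] at this
  have hmeasB : Measurable fun u : Pt d => ν (Metric.ball u ε) := meas_ball ν ε
  -- rewrite the inner set integral as an indicator double integral
  set S := {p : Pt d × Pt d | dist p.2 p.1 < ε} with hSdef
  have hS : MeasurableSet S :=
    (isOpen_lt (continuous_snd.dist continuous_fst) continuous_const).measurableSet
  have key : ∀ u : Pt d, (∫⁻ v in Metric.ball u ε, f v ^ k ∂volume)
      = ∫⁻ v, S.indicator (fun p => f p.2 ^ k) (u, v) ∂volume := by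
    intro u
    rw [← lintegral_indicator measurableSet_ball]
    refine lintegral_congr fun v => ?_
    classical
    simp [Set.indicator_apply, hSdef, Metric.mem_ball]
  have hmeasInner : Measurable fun u : Pt d => ∫⁻ v in Metric.ball u ε, f v ^ k ∂volume := by
    simp_rw [key]
    exact Measurable.lintegral_prod_right' (((hfm.pow_const k).comp measurable_snd).indicator hS)
  -- Tonelli swap
  have hswap : ∫⁻ u, (∫⁻ v in Metric.ball u ε, f v ^ k ∂volume) ∂volume = C * I := by
    simp_rw [key]
    have hswapm : AEMeasurable
        (Function.uncurry fun (u v : Pt d) => S.indicator (fun p => f p.2 ^ k) (u, v))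
        ((volume : Measure (Pt d)).prod volume) :=
      (((hfm.pow_const k).comp measurable_snd).indicator hS).aemeasurable
    rw [lintegral_lintegral_swap hswapm]
    have inner : ∀ v : Pt d,
        (∫⁻ u, S.indicator (fun p => f p.2 ^ k) (u, v) ∂volume) = f v ^ k * C := by
      intro v
      have heq : ∀ u : Pt d, S.indicator (fun p => f p.2 ^ k) (u, v)
          = (Metric.ball v ε).indicator (fun _ => f v ^ k) u := by
        intro u
        classical
        simp only [Set.indicator_apply, hSdef, Set.mem_setOf_eq, Metric.mem_ball]
        rw [dist_comm u v]
      simp_rw [heq]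
      rw [lintegral_indicator measurableSet_ball, setLIntegral_const, hvol v]
    simp_rw [inner]
    rw [lintegral_mul_const _ (hfm.pow_const k), mul_comm]
  -- bound on ∫ νB^k dvolume
  have hk_bound : ∫⁻ u, ν (Metric.ball u ε) ^ k ∂volume ≤ C ^ k * I := by
    calc ∫⁻ u, ν (Metric.ball u ε) ^ k ∂volume
        ≤ ∫⁻ u, C ^ (k - 1) * ∫⁻ v in Metric.ball u ε, f v ^ k ∂volume ∂volume :=
          lintegral_mono fun u => hJ u
      _ = C ^ (k - 1) * ∫⁻ u, (∫⁻ v in Metric.ball u ε, f v ^ k ∂volume) ∂volume :=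
          lintegral_const_mul _ hmeasInner
      _ = C ^ (k - 1) * (C * I) := by rw [hswap]
      _ = C ^ k * I := by
          rw [← mul_assoc, ← pow_succ]
          congr 2
          omega
  -- main Hölder
  have hk1 : (1 : ℝ) < (k : ℝ) := by exact_mod_cast hk.trans_lt' one_lt_two
  have hk0 : (k : ℝ) ≠ 0 := by positivity
  have hk10 : (k : ℝ) - 1 ≠ 0 := by
    have : (1:ℝ) < (k:ℝ) := hk1
    linarith
  have hpq : (k : ℝ).HolderConjugate ((k : ℝ) / ((k : ℝ) - 1)) :=
    Real.HolderConjugate.conjExponent hk1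
  have hmain : ∫⁻ u, ν (Metric.ball u ε) ^ (k - 1) ∂ν
      = ∫⁻ u, f u * ν (Metric.ball u ε) ^ (k - 1) ∂volume :=
    (lintegral_rnDeriv_mul hac (hmeasB.pow_const (k - 1)).aemeasurable).symm
  have H := ENNReal.lintegral_mul_le_Lp_mul_Lq (volume : Measure (Pt d)) hpq hfm.aemeasurable
    ((hmeasB.pow_const (k - 1)).aemeasurable)
  simp only [Pi.mul_apply] at H
  -- convert the second factor's integrand
  have hxq : ∀ x : ℝ≥0∞, (x ^ (k - 1)) ^ ((k : ℝ) / ((k : ℝ) - 1)) = x ^ k := by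
    intro x
    rw [← ENNReal.rpow_natCast x (k - 1), ← ENNReal.rpow_mul]
    have : ((k - 1 : ℕ) : ℝ) * ((k : ℝ) / ((k : ℝ) - 1)) = (k : ℕ) := by
      rw [Nat.cast_sub (by omega : 1 ≤ k)]
      field_simp
      norm_num
    rw [this, ENNReal.rpow_natCast]
  simp_rw [hxq] at H
  -- convert the first factor's integrand
  have hxk : ∀ x : ℝ≥0∞, x ^ ((k : ℝ)) = x ^ k := fun x => ENNReal.rpow_natCast x k
  simp_rw [hxk] at H
  rw [hmain]
  refine H.trans ?_
  -- now bound (∫ νB^k)^(1/q) using hk_bound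
  have h2 : (∫⁻ u, ν (Metric.ball u ε) ^ k ∂volume) ^ (1 / ((k : ℝ) / ((k : ℝ) - 1)))
      ≤ C ^ (k - 1) * I ^ (1 / ((k : ℝ) / ((k : ℝ) - 1))) := by
    refine (ENNReal.rpow_le_rpow hk_bound hpq.symm.one_div_nonneg).trans_eq ?_
    rw [ENNReal.mul_rpow_of_nonneg _ _ hpq.symm.one_div_nonneg]
    congr 1
    rw [← ENNReal.rpow_natCast C k, ← ENNReal.rpow_mul]
    have : (k : ℝ) * (1 / ((k : ℝ) / ((k : ℝ) - 1))) = ((k - 1 : ℕ) : ℝ) := by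
      rw [Nat.cast_sub (by omega : 1 ≤ k)]
      field_simp
      norm_num
    rw [this, ENNReal.rpow_natCast]
  calc (∫⁻ u, f u ^ k ∂volume) ^ (1 / (k:ℝ)) * (∫⁻ u, ν (Metric.ball u ε) ^ k ∂volume) ^ (1 / ((k : ℝ) / ((k : ℝ) - 1)))
      ≤ I ^ (1 / (k:ℝ)) * (C ^ (k - 1) * I ^ (1 / ((k : ℝ) / ((k : ℝ) - 1)))) := by
        exact mul_le_mul_right h2 _
    _ = C ^ (k - 1) * (I ^ (1 / (k:ℝ)) * I ^ (1 / ((k : ℝ) / ((k : ℝ) - 1)))) := by ring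
    _ = C ^ (k - 1) * I := by
        rw [← ENNReal.rpow_add_of_nonneg _ _ (by positivity) hpq.symm.one_div_nonneg]
        congr 1
        have : 1 / (k:ℝ) + 1 / ((k : ℝ) / ((k : ℝ) - 1)) = 1 := by field_simp; ring
        rw [this, ENNReal.rpow_one]

lemma scale_inv {d k : ℕ} (hk : 2 ≤ k) {ε : ℝ} (hε : 0 < ε) :
    ENNReal.ofReal (ε ^ (-(d * (k - 1) : ℤ))) = (ENNReal.ofReal (ε ^ d) ^ (k - 1))⁻¹ := by
  have h1 : ENNReal.ofReal (ε ^ d) ^ (k - 1) = ENNReal.ofReal (ε ^ (d * (k - 1))) := by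
    rw [← ENNReal.ofReal_pow (by positivity), ← pow_mul]
  have h2 : ε ^ (-(d * (k - 1) : ℤ)) = (ε ^ (d * (k - 1) : ℕ))⁻¹ := by
    rw [_root_.zpow_neg]
    congr 1
    rw [← zpow_natCast ε (d * (k - 1))]
    congr 1
    push_cast [Nat.cast_sub (by omega : 1 ≤ k)]
    ring
  rw [h1, h2, ENNReal.ofReal_inv_of_pos (by positivity)]

lemma scale_cancel {d k : ℕ} (hk : 2 ≤ k) {ε : ℝ} (hε : 0 < ε) :
    ENNReal.ofReal (ε ^ (-(d * (k - 1) : ℤ))) * ENNReal.ofReal (ε ^ d) ^ (k - 1) = 1 := by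
  rw [scale_inv hk hε]
  exact ENNReal.inv_mul_cancel
    (pow_ne_zero _ (ENNReal.ofReal_pos.mpr (by positivity)).ne')
    (pow_ne_top ENNReal.ofReal_ne_top)

lemma keyB {d k : ℕ} (hd : 1 ≤ d) (hk : 2 ≤ k) (ν : Measure (Pt d)) [IsFiniteMeasure ν]
    (hac : ν ≪ volume) :
    ∀ᵐ u ∂ν, Tendsto
      (fun ε : ℝ => ENNReal.ofReal (ε ^ (-(d * (k - 1) : ℤ))) * ν (Metric.ball u ε) ^ (k - 1))
      (nhdsWithin 0 (Set.Ioi 0))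
      (nhds ((ν.rnDeriv volume u * volume (Metric.ball (0 : Pt d) 1)) ^ (k - 1))) := by
  haveI : Nonempty (Fin d) := Fin.pos_iff_nonempty.mp hd
  set ω := volume (Metric.ball (0 : Pt d) 1) with hω
  have hω0 : ω ≠ 0 := (measure_ball_pos _ _ one_pos).ne'
  have hωt : ω ≠ ⊤ := measure_ball_lt_top.ne
  have hsph : ∀ (x : Pt d) (r : ℝ), ν (closedBall x r) = ν (ball x r) := by
    intro x r
    refine le_antisymm ?_ (measure_mono ball_subset_closedBall)
    rw [← ball_union_sphere]
    refine (measure_union_le _ _).trans ?_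
    rw [hac (Measure.addHaar_sphere volume x r), add_zero]
  filter_upwards [(Besicovitch.ae_tendsto_rnDeriv ν volume).filter_mono hac.ae_le] with x hx
  have h1 : Tendsto (fun r : ℝ => ν (ball x r) / (ENNReal.ofReal (r ^ d) * ω))
      (nhdsWithin 0 (Set.Ioi 0)) (nhds (ν.rnDeriv volume x)) := by
    refine hx.congr' ?_
    filter_upwards [self_mem_nhdsWithin] with r hr
    rw [← hsph x r, Measure.addHaar_closedBall (volume : Measure (Pt d)) x (le_of_lt hr),
      finrank_euclideanSpace_fin]
  have h2 : Tendsto (fun r : ℝ => ν (ball x r) / (ENNReal.ofReal (r ^ d) * ω) * ω)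
      (nhdsWithin 0 (Set.Ioi 0)) (nhds (ν.rnDeriv volume x * ω)) :=
    ENNReal.Tendsto.mul_const h1 (Or.inr hωt)
  have h3 : Tendsto (fun r : ℝ => ν (ball x r) / ENNReal.ofReal (r ^ d))
      (nhdsWithin 0 (Set.Ioi 0)) (nhds (ν.rnDeriv volume x * ω)) := by
    refine h2.congr' ?_
    filter_upwards [self_mem_nhdsWithin] with r hr
    have hr' : (0:ℝ) < r := hr
    have ha0 : ENNReal.ofReal (r ^ d) ≠ 0 := (ENNReal.ofReal_pos.mpr (by positivity)).ne'
    rw [div_eq_mul_inv, div_eq_mul_inv,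
      ENNReal.mul_inv (Or.inl ha0) (Or.inl ENNReal.ofReal_ne_top), ← mul_assoc, mul_assoc _ _ ω,
      ENNReal.inv_mul_cancel hω0 hωt, mul_one]
  have h4 : Tendsto (fun r : ℝ => (ν (ball x r) / ENNReal.ofReal (r ^ d)) ^ (k - 1))
      (nhdsWithin 0 (Set.Ioi 0)) (nhds ((ν.rnDeriv volume x * ω) ^ (k - 1))) :=
    ((ENNReal.continuous_pow (k - 1)).tendsto _).comp h3
  refine h4.congr' ?_
  filter_upwards [self_mem_nhdsWithin] with r hr
  have hr' : (0:ℝ) < r := hr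
  rw [div_eq_mul_inv, mul_pow, scale_inv hk hr', ← ENNReal.inv_pow, mul_comm]

/-- If `ν` is a finite Borel measure on `ℝ^d`, absolutely continuous
with density `f` satisfying `∫ f^k < ∞`, then
`ε^{−d(k−1)} ∫ ν(B(u,ε))^{k−1} dν(u) → ω_d^{k−1} ∫ f(u)^k du` as `ε → 0⁺`, where `ω_d`
is the Lebesgue measure of the unit ball. -/
theorem stmt10 (d k : ℕ) (hd : 1 ≤ d) (hk : 2 ≤ k) (ν : Measure (Pt d))
    (hfin : IsFiniteMeasure ν) (hac : ν ≪ volume)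
    (hint : (∫⁻ u : Pt d, ν.rnDeriv volume u ^ k ∂volume) < ⊤) :
    Filter.Tendsto
      (fun ε : ℝ => ENNReal.ofReal (ε ^ (-(d * (k - 1) : ℤ))) *
        ∫⁻ u : Pt d, ν (Metric.ball u ε) ^ (k - 1) ∂ν)
      (nhdsWithin 0 (Set.Ioi 0))
      (nhds ((volume (Metric.ball (0 : Pt d) 1)) ^ (k - 1) *
        ∫⁻ u : Pt d, ν.rnDeriv volume u ^ k ∂volume)) := by
  haveI := hfin
  haveI : Nonempty (Fin d) := Fin.pos_iff_nonempty.mp hd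
  set f := ν.rnDeriv volume with hfdef
  have hfm : Measurable f := Measure.measurable_rnDeriv ν volume
  set ω := volume (Metric.ball (0 : Pt d) 1) with hω
  set I := ∫⁻ u : Pt d, f u ^ k ∂volume with hI
  set L := ω ^ (k - 1) * I with hL
  -- the value of the limit integral
  have hLint : ∫⁻ u, (f u * ω) ^ (k - 1) ∂ν = L := by
    have hpt : ∀ u, (f u * ω) ^ (k - 1) = ω ^ (k - 1) * f u ^ (k - 1) := fun u => by
      rw [mul_pow, mul_comm]
    simp_rw [hpt]
    rw [lintegral_const_mul _ (hfm.pow_const (k - 1))]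
    congr 1
    have hmul := lintegral_rnDeriv_mul hac ((hfm.pow_const (k - 1)).aemeasurable)
    rw [← hmul]
    refine lintegral_congr fun x => ?_
    rw [← pow_succ']
    congr 1
    omega
  have hae := keyB hd hk ν hac
  rw [Filter.tendsto_iff_seq_tendsto]
  intro xs hxs
  have hpos : ∀ᶠ j in atTop, xs j ∈ Set.Ioi (0:ℝ) := hxs.eventually eventually_mem_nhdsWithin
  set g : ℕ → Pt d → ℝ≥0∞ := fun j u =>
    ENNReal.ofReal (xs j ^ (-(d * (k - 1) : ℤ))) * ν (Metric.ball u (xs j)) ^ (k - 1) with hg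
  have hgm : ∀ j, Measurable (g j) := fun j =>
    ((meas_ball ν (xs j)).pow_const _).const_mul _
  have hfun : ((fun ε : ℝ => ENNReal.ofReal (ε ^ (-(d * (k - 1) : ℤ))) *
      ∫⁻ u : Pt d, ν (Metric.ball u ε) ^ (k - 1) ∂ν) ∘ xs)
      = fun j => ∫⁻ u, g j u ∂ν := by
    funext j
    simp only [Function.comp_apply, hg]
    rw [lintegral_const_mul _ ((meas_ball ν (xs j)).pow_const _)]
  rw [hfun]
  -- limsup bound
  have hup : ∀ᶠ j in atTop, (∫⁻ u, g j u ∂ν) ≤ L := by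
    filter_upwards [hpos] with j hj
    have hj' : (0:ℝ) < xs j := hj
    have hA := keyA hd hk ν hac hj'
    simp only [hg]
    rw [lintegral_const_mul _ ((meas_ball ν (xs j)).pow_const _)]
    calc ENNReal.ofReal (xs j ^ (-(d * (k - 1) : ℤ))) *
          ∫⁻ u, ν (Metric.ball u (xs j)) ^ (k - 1) ∂ν
        ≤ ENNReal.ofReal (xs j ^ (-(d * (k - 1) : ℤ))) *
          ((ENNReal.ofReal (xs j ^ d) * ω) ^ (k - 1) * I) := mul_le_mul_right hA _
      _ = (ENNReal.ofReal (xs j ^ (-(d * (k - 1) : ℤ))) * ENNReal.ofReal (xs j ^ d) ^ (k - 1)) *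
          (ω ^ (k - 1) * I) := by
          rw [mul_pow]
          ring
      _ = L := by rw [scale_cancel hk hj', one_mul, hL]
  -- liminf bound via Fatou
  have hptwise : ∀ᵐ u ∂ν, Tendsto (fun j => g j u) atTop (nhds ((f u * ω) ^ (k - 1))) := by
    filter_upwards [hae] with u hu
    exact hu.comp hxs
  have hliminf_pt : ∀ᵐ u ∂ν, liminf (fun j => g j u) atTop = (f u * ω) ^ (k - 1) :=
    hptwise.mono fun u hu => hu.liminf_eq
  have hFat := lintegral_liminf_le hgm (μ := ν) (u := atTop)
  have hdown : L ≤ liminf (fun j => ∫⁻ u, g j u ∂ν) atTop := by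
    refine le_trans ?_ hFat
    rw [lintegral_congr_ae hliminf_pt, hLint]
  have hll : liminf (fun j => ∫⁻ u, g j u ∂ν) atTop ≤ limsup (fun j => ∫⁻ u, g j u ∂ν) atTop :=
    liminf_le_limsup (by isBoundedDefault) (by isBoundedDefault)
  have hup' : limsup (fun j => ∫⁻ u, g j u ∂ν) atTop ≤ L :=
    limsup_le_of_le (by isBoundedDefault) hup
  have h1 : liminf (fun j => ∫⁻ u, g j u ∂ν) atTop = L :=
    le_antisymm (hll.trans hup') hdown
  have h2 : limsup (fun j => ∫⁻ u, g j u ∂ν) atTop = L :=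
    le_antisymm hup' (hdown.trans hll)
  exact tendsto_of_liminf_eq_limsup h1 h2
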